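/- Let k and ℓ be natural numbers with k ≥ 1 and ℓ ≥ 1, and suppose ν₂(ℓ) = ν₂(k). Then g(k,ℓ) = g(k−1,ℓ−1) and g(k−1,ℓ) = 0. -/

import Mathlib

/-- `ℓ` contains `m` to base 2: there exists `k` with `m < 2^k ≤ ℓ`, and every
binary digit of `m` is at most the corresponding binary digit of `ℓ`
(equivalently, the bitwise AND of `m` and `ℓ` equals `m`). -/
def ContainsBase2 (l m : ℕ) : Prop :=
  (∃ k, m < 2 ^ k ∧ 2 ^ k ≤ l) ∧ m &&& l = m

-- `g ℓ m = 1` if `m ≥ 0` and `ℓ` contains `m` to base 2, and `g ℓ m = 0` otherwise.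
open Classical in
noncomputable def g (l : ℕ) (m : ℤ) : ℤ :=
  if 0 ≤ m ∧ ContainsBase2 l m.toNat then 1 else 0


lemma bits_aux (n v : ℕ) (hn : 1 ≤ n) (hv : padicValNat 2 n = v) :
    (∀ i, i < v → n.testBit i = false) ∧ n.testBit v = true ∧
    (∀ i, i < v → (n - 1).testBit i = true) ∧ (n - 1).testBit v = false ∧
    (∀ i, v < i → (n - 1).testBit i = n.testBit i) := by
  obtain ⟨m, hm⟩ : 2 ^ v ∣ n := hv ▸ pow_padicValNat_dvd
  have hmodd : ¬ 2 ∣ m := by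
    intro ⟨q, hq⟩
    have : 2 ^ (v + 1) ∣ n := ⟨q, by rw [hm, hq]; ring⟩
    exact pow_succ_padicValNat_not_dvd (by omega) (hv ▸ this)
  obtain ⟨q, hq⟩ : ∃ q, m = 2 * q + 1 := ⟨m / 2, by omega⟩
  have hpos : 1 ≤ 2 ^ v := Nat.one_le_two_pow
  have hn1 : n - 1 = 2 ^ v * (2 * q) + (2 ^ v - 1) := by
    have : n = 2 ^ v * (2 * q) + 2 ^ v := by rw [hm, hq]; ring
    omega
  have hbn : ∀ j, n.testBit j = (decide (j ≥ v) && m.testBit (j - v)) := by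
    intro j; rw [hm, Nat.testBit_two_pow_mul]
  have hbn1 : ∀ j, (n - 1).testBit j =
      if j < v then (2 ^ v - 1).testBit j else (2 * q).testBit (j - v) := by
    intro j; rw [hn1, Nat.testBit_two_pow_mul_add _ (by omega)]
  refine ⟨fun i hi => ?_, ?_, fun i hi => ?_, ?_, fun i hi => ?_⟩
  · rw [hbn]; simp [Nat.not_le.mpr hi]
  · rw [hbn]; simp [hq, Nat.testBit_zero]
  · rw [hbn1]; simp [hi]
  · rw [hbn1]; simp [Nat.testBit_zero]
  · rw [hbn1, hbn, if_neg (by omega), decide_eq_true (show i ≥ v by omega), Bool.true_and]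
    obtain ⟨s, hs⟩ : ∃ s, i - v = s + 1 := ⟨i - v - 1, by omega⟩
    rw [hs, hq, Nat.testBit_add_one, Nat.testBit_add_one]
    congr 1
    omega


lemma and_eq_iff_testBit (a b : ℕ) :
    a &&& b = a ↔ ∀ i, a.testBit i = true → b.testBit i = true := by
  constructor
  · intro hab i hi
    have h2 := congrArg (fun x => Nat.testBit x i) hab
    simp only [Nat.testBit_and, hi, Bool.true_and] at h2
    exact h2
  · intro hall
    apply Nat.eq_of_testBit_eq
    intro i
    rw [Nat.testBit_and]
    cases hcase : a.testBit i
    · simp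
    · simp [hall i hcase]

theorem stmt_11 (k l : ℕ) (hk : 1 ≤ k) (hl : 1 ≤ l)
    (h : padicValNat 2 l = padicValNat 2 k) :
    g k l = g (k - 1) ((l : ℤ) - 1) ∧ g (k - 1) l = 0 := by
  classical
  set v := padicValNat 2 k with hvk
  obtain ⟨hk0, hkv, hk1, hk1v, hk1g⟩ := bits_aux k v hk rfl
  obtain ⟨hl0, hlv, hl1, hl1v, hl1g⟩ := bits_aux l v hl h
  constructor
  · have key : ContainsBase2 k l ↔ ContainsBase2 (k - 1) (l - 1) := by
      constructor
      · rintro ⟨⟨j, hjl, hjk⟩, hand⟩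
        have hAND := (and_eq_iff_testBit l k).mp hand
        have hne : 2 ^ j ≠ k := by
          intro he
          have hjv : j = v := by
            have h2 := hkv; rw [← he, Nat.testBit_two_pow] at h2; simpa using h2
          have hlge : 2 ^ v ≤ l := Nat.ge_two_pow_of_testBit hlv
          subst hjv
          omega
        refine ⟨⟨j, by omega, by omega⟩, (and_eq_iff_testBit _ _).mpr ?_⟩
        intro i hi
        rcases lt_trichotomy i v with hc | hc | hc
        · exact hk1 i hc
        · subst hc; rw [hl1v] at hi; cases hi
        · rw [hk1g i hc]; rw [hl1g i hc] at hi; exact hAND i hi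
      · rintro ⟨⟨j, hjl, hjk⟩, hand⟩
        have hAND := (and_eq_iff_testBit _ _).mp hand
        have hland : l &&& k = l := by
          refine (and_eq_iff_testBit l k).mpr (fun i hi => ?_)
          rcases lt_trichotomy i v with hc | hc | hc
          · rw [hl0 i hc] at hi; cases hi
          · subst hc; exact hkv
          · rw [← hk1g i hc]; exact hAND i (by rw [hl1g i hc]; exact hi)
        refine ⟨?_, hland⟩
        by_cases hlt : l < 2 ^ j
        · exact ⟨j, hlt, by omega⟩
        · have hle : l = 2 ^ j := by omega
          have hjv : j = v := by
            have h2 := hlv; rw [hle, Nat.testBit_two_pow] at h2; simpa using h2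
          subst hjv
          have hpow : 2 ^ v < 2 ^ (v + 1) := Nat.pow_lt_pow_right (by norm_num) (lt_add_one v)
          refine ⟨v + 1, by omega, ?_⟩
          obtain ⟨m, hm⟩ : 2 ^ v ∣ k := hvk ▸ pow_padicValNat_dvd
          have hkgt : 2 ^ v < k := by omega
          have hm2 : 2 ≤ m := by
            rcases m with - | - | m
            · omega
            · omega
            · omega
          calc 2 ^ (v + 1) = 2 ^ v * 2 := by ring
            _ ≤ 2 ^ v * m := Nat.mul_le_mul_left _ hm2
            _ = k := hm.symm
    have h1 : ((l : ℤ)).toNat = l := Int.toNat_natCast l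
    have h2 : ((l : ℤ) - 1).toNat = l - 1 := by omega
    rw [g, g, h1, h2]
    have hc1 : (0 : ℤ) ≤ (l : ℤ) := by positivity
    have hc2 : (0 : ℤ) ≤ (l : ℤ) - 1 := by
      have : (1 : ℤ) ≤ (l : ℤ) := by exact_mod_cast hl
      omega
    have hiff : (0 ≤ (l : ℤ) ∧ ContainsBase2 k l) ↔
        (0 ≤ (l : ℤ) - 1 ∧ ContainsBase2 (k - 1) (l - 1)) := by
      constructor
      · rintro ⟨-, hc⟩; exact ⟨hc2, key.mp hc⟩
      · rintro ⟨-, hc⟩; exact ⟨hc1, key.mpr hc⟩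
    rw [if_congr hiff rfl rfl]
  · rw [g, Int.toNat_natCast, if_neg]
    rintro ⟨-, -, hand⟩
    have h2 := congrArg (fun x => Nat.testBit x v) hand
    simp only [Nat.testBit_and, hlv, hk1v, Bool.true_and] at h2
    cases h2
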